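/- Let Q and P be pmfs on a finite set 𝒵 with Q absolutely continuous w.r.t. P, and let 𝒟ₙ ⊆ 𝒵ⁿ be any event with Qⁿ(𝒟ₙ) ≥ 1 − β for some β ∈ [0, 1). Then Pⁿ(𝒟ₙ) ≥ exp₂( −(n·D(Q‖P) + h₂(β)) / (1 − β) ), where h₂ is the binary entropy function (in bits) and D(Q‖P) is relative entropy in bits. -/

import Mathlib

open Finset

private lemma log_sum_ineq {ι : Type*} (s : Finset ι) (a b : ι → ℝ)
    (ha : ∀ i ∈ s, 0 ≤ a i) (hb : ∀ i ∈ s, 0 ≤ b i)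
    (hab : ∀ i ∈ s, b i = 0 → a i = 0) :
    (∑ i ∈ s, a i) * Real.log ((∑ i ∈ s, a i) / (∑ i ∈ s, b i)) ≤
      ∑ i ∈ s, a i * Real.log (a i / b i) := by
  rcases (Finset.sum_nonneg hb).eq_or_lt with hB | hB
  · have hb0 : ∀ i ∈ s, b i = 0 := (Finset.sum_eq_zero_iff_of_nonneg hb).1 hB.symm
    have ha0 : ∀ i ∈ s, a i = 0 := fun i hi => hab i hi (hb0 i hi)
    have hL : (∑ i ∈ s, a i) = 0 := Finset.sum_eq_zero ha0
    have hR : ∑ i ∈ s, a i * Real.log (a i / b i) = 0 :=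
      Finset.sum_eq_zero fun i hi => by rw [ha0 i hi]; ring
    rw [hL, hR]; simp
  · set A := ∑ i ∈ s, a i with hA
    set B := ∑ i ∈ s, b i with hBdef
    have hwsum : ∑ i ∈ s, b i / B = 1 := by
      rw [← Finset.sum_div, div_self hB.ne']
    have jensen := Real.convexOn_mul_log.map_sum_le (t := s)
      (w := fun i => b i / B) (p := fun i => a i / b i)
      (fun i hi => div_nonneg (hb i hi) hB.le) hwsum
      (fun i hi => Set.mem_Ici.2 (div_nonneg (ha i hi) (hb i hi)))
    have hsum : ∑ i ∈ s, (b i / B) • (a i / b i) = A / B := by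
      rw [hA, Finset.sum_div]
      refine Finset.sum_congr rfl fun i hi => ?_
      rcases eq_or_ne (b i) 0 with h | h
      · rw [smul_eq_mul, h, hab i hi h]; simp
      · rw [smul_eq_mul]; field_simp
    rw [hsum] at jensen
    simp only [smul_eq_mul] at jensen
    have h2 := mul_le_mul_of_nonneg_left jensen hB.le
    calc A * Real.log (A / B) = B * (A / B * Real.log (A / B)) := by
          field_simp
      _ ≤ B * ∑ i ∈ s, b i / B * (a i / b i * Real.log (a i / b i)) := h2
      _ = ∑ i ∈ s, b i * (a i / b i * Real.log (a i / b i)) := by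
          rw [Finset.mul_sum]
          refine Finset.sum_congr rfl fun i hi => ?_
          field_simp
      _ = ∑ i ∈ s, a i * Real.log (a i / b i) := by
          refine Finset.sum_congr rfl fun i hi => ?_
          rcases eq_or_ne (b i) 0 with h | h
          · rw [h, hab i hi h]; simp
          · field_simp

private lemma sum_prod_pow' {Z : Type*} [Fintype Z] (f : Z → ℝ) :
    ∀ n : ℕ, ∑ ω : Fin n → Z, ∏ i, f (ω i) = (∑ z, f z) ^ n
  | 0 => by simp
  | (n+1) => by
    rw [← Equiv.sum_comp (Fin.consEquiv fun _ => Z) (fun ω => ∏ i, f (ω i)),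
      Fintype.sum_prod_type]
    simp only [Fin.consEquiv_apply, Fin.prod_univ_succ, Fin.cons_zero, Fin.cons_succ]
    rw [pow_succ, mul_comm ((∑ z, f z) ^ n)]
    rw [← sum_prod_pow' f n, ← Finset.sum_mul_sum]

private lemma kl_tensor {Z : Type*} [Fintype Z] (P Q : Z → ℝ)
    (hQ1 : ∑ z, Q z = 1) (hac : ∀ z, P z = 0 → Q z = 0) :
    ∀ n : ℕ, ∑ ω : Fin n → Z, (∏ i, Q (ω i)) * Real.log ((∏ i, Q (ω i)) / ∏ i, P (ω i)) =
      (n : ℝ) * ∑ z, Q z * Real.log (Q z / P z)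
  | 0 => by simp
  | (n+1) => by
    rw [← Equiv.sum_comp (Fin.consEquiv fun _ => Z)
      (fun ω => (∏ i, Q (ω i)) * Real.log ((∏ i, Q (ω i)) / ∏ i, P (ω i))),
      Fintype.sum_prod_type]
    simp only [Fin.consEquiv_apply, Fin.prod_univ_succ, Fin.cons_zero, Fin.cons_succ]
    have key : ∀ (z : Z) (ω : Fin n → Z),
        (Q z * ∏ i, Q (ω i)) * Real.log ((Q z * ∏ i, Q (ω i)) / (P z * ∏ i, P (ω i))) =
        Q z * Real.log (Q z / P z) * (∏ i, Q (ω i)) +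
          Q z * ((∏ i, Q (ω i)) * Real.log ((∏ i, Q (ω i)) / ∏ i, P (ω i))) := by
      intro z ω
      rcases eq_or_ne (Q z) 0 with hz | hz
      · simp [hz]
      rcases eq_or_ne (∏ i, Q (ω i)) 0 with hw | hw
      · simp [hw]
      have hPz : P z ≠ 0 := fun h => hz (hac z h)
      have hPn : (∏ i, P (ω i)) ≠ 0 := by
        intro h
        obtain ⟨i, -, hi⟩ := Finset.prod_eq_zero_iff.1 h
        exact hw (Finset.prod_eq_zero (Finset.mem_univ i) (hac _ hi))
      rw [show (Q z * ∏ i, Q (ω i)) / (P z * ∏ i, P (ω i)) =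
          (Q z / P z) * ((∏ i, Q (ω i)) / ∏ i, P (ω i)) from
        (div_mul_div_comm _ _ _ _).symm,
        Real.log_mul (div_ne_zero hz hPz) (div_ne_zero hw hPn)]
      ring
    calc ∑ z, ∑ ω : Fin n → Z,
          (Q z * ∏ i, Q (ω i)) * Real.log ((Q z * ∏ i, Q (ω i)) / (P z * ∏ i, P (ω i)))
        = ∑ z, ∑ ω : Fin n → Z, (Q z * Real.log (Q z / P z) * (∏ i, Q (ω i)) +
            Q z * ((∏ i, Q (ω i)) * Real.log ((∏ i, Q (ω i)) / ∏ i, P (ω i)))) := by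
          refine Finset.sum_congr rfl fun z _ => Finset.sum_congr rfl fun ω _ => key z ω
      _ = ∑ z, (Q z * Real.log (Q z / P z) * (∑ ω : Fin n → Z, ∏ i, Q (ω i)) +
            Q z * ((n : ℝ) * ∑ w, Q w * Real.log (Q w / P w))) := by
          refine Finset.sum_congr rfl fun z _ => ?_
          rw [Finset.sum_add_distrib, ← Finset.mul_sum, ← Finset.mul_sum,
            kl_tensor P Q hQ1 hac n]
      _ = (↑(n + 1) : ℝ) * ∑ z, Q z * Real.log (Q z / P z) := by
          rw [sum_prod_pow' Q n, hQ1, one_pow]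
          rw [Finset.sum_add_distrib, ← Finset.sum_mul, ← Finset.sum_mul, hQ1]
          push_cast; ring

private lemma binEntropy_ratio {t q : ℝ} (ht : 0 < t) (htq : t ≤ q) (hq : q ≤ 1) :
    t * Real.binEntropy q ≤ q * Real.binEntropy t := by
  have hq0 : 0 < q := lt_of_lt_of_le ht htq
  have hmq : q ∈ Set.Icc (0:ℝ) 1 := ⟨hq0.le, hq⟩
  have hm0 : (0:ℝ) ∈ Set.Icc (0:ℝ) 1 := ⟨le_refl 0, zero_le_one⟩
  have ha : (0:ℝ) ≤ t / q := by positivity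
  have hb : (0:ℝ) ≤ 1 - t / q := by
    have : t / q ≤ 1 := div_le_one_of_le₀ htq hq0.le
    linarith
  have hab : t / q + (1 - t / q) = 1 := by ring
  have hcc := Real.strictConcave_binEntropy.concaveOn.2 hmq hm0 ha hb hab
  simp only [smul_eq_mul, mul_zero, Real.binEntropy_zero, add_zero,
    div_mul_cancel₀ t hq0.ne'] at hcc
  have h2 := mul_le_mul_of_nonneg_left hcc hq0.le
  have h3 : q * (t / q * Real.binEntropy q) = t * Real.binEntropy q := by
    field_simp
  linarith

set_option maxHeartbeats 1600000 in
/-- Change-of-measure (Haroutunian) bound: if `Qⁿ(𝒟ₙ) ≥ 1 − β` with `β ∈ [0,1)`, then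
`Pⁿ(𝒟ₙ) ≥ 2^{−(n·D(Q‖P) + h₂(β))/(1−β)}`. -/
theorem change_of_measure_bound
    {Z : Type*} [Fintype Z]
    (P Q : Z → ℝ)
    (hP0 : ∀ z, 0 ≤ P z) (hP1 : ∑ z, P z = 1)
    (hQ0 : ∀ z, 0 ≤ Q z) (hQ1 : ∑ z, Q z = 1)
    (hac : ∀ z, P z = 0 → Q z = 0)
    (n : ℕ) (D : Finset (Fin n → Z))
    (β : ℝ) (hβ0 : 0 ≤ β) (hβ1 : β < 1)
    (hQD : 1 - β ≤ ∑ ω ∈ D, ∏ i, Q (ω i)) :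
    (2 : ℝ) ^ (-(((n : ℝ) * ∑ z, Q z * Real.logb 2 (Q z / P z)) +
        (-β * Real.logb 2 β - (1 - β) * Real.logb 2 (1 - β))) / (1 - β)) ≤
      ∑ ω ∈ D, ∏ i, P (ω i) := by
  classical
  have hβ' : (0:ℝ) < 1 - β := by linarith
  set K2 := ∑ z, Q z * Real.logb 2 (Q z / P z) with hK2def
  set h2b := -β * Real.logb 2 β - (1 - β) * Real.logb 2 (1 - β) with hh2bdef
  set q := ∑ ω ∈ D, ∏ i, Q (ω i) with hqdef
  set p := ∑ ω ∈ D, ∏ i, P (ω i) with hpdef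
  set K := ∑ z, Q z * Real.log (Q z / P z) with hKdef
  have hl2 : (0:ℝ) < Real.log 2 := Real.log_pos (by norm_num)
  -- basic positivity facts
  have hQn0 : ∀ ω : Fin n → Z, 0 ≤ ∏ i, Q (ω i) :=
    fun ω => Finset.prod_nonneg fun i _ => hQ0 _
  have hPn0 : ∀ ω : Fin n → Z, 0 ≤ ∏ i, P (ω i) :=
    fun ω => Finset.prod_nonneg fun i _ => hP0 _
  have hacn : ∀ ω : Fin n → Z, (∏ i, P (ω i)) = 0 → (∏ i, Q (ω i)) = 0 := by
    intro ω h
    obtain ⟨i, -, hi⟩ := Finset.prod_eq_zero_iff.1 h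
    exact Finset.prod_eq_zero (Finset.mem_univ i) (hac _ hi)
  have hq0 : 0 < q := lt_of_lt_of_le hβ' hQD
  have hq1 : q ≤ 1 := by
    have := Finset.sum_le_sum_of_subset_of_nonneg (Finset.subset_univ D)
      (fun ω _ _ => hQn0 ω)
    rw [sum_prod_pow' Q n, hQ1, one_pow] at this
    exact this
  have hp1 : p ≤ 1 := by
    have := Finset.sum_le_sum_of_subset_of_nonneg (Finset.subset_univ D)
      (fun ω _ _ => hPn0 ω)
    rw [sum_prod_pow' P n, hP1, one_pow] at this
    exact this
  have hp0 : 0 < p := by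
    rcases (Finset.sum_nonneg fun ω _ => hPn0 ω).eq_or_lt with h | h
    · exfalso
      have hz : ∀ ω ∈ D, (∏ i, P (ω i)) = 0 :=
        (Finset.sum_eq_zero_iff_of_nonneg fun ω _ => hPn0 ω).1 h.symm
      have : q = 0 := Finset.sum_eq_zero fun ω hω => hacn ω (hz ω hω)
      rw [this] at hq0; exact lt_irrefl 0 hq0
    · exact h
  -- KL nonneg
  have hKnn : 0 ≤ K := by
    have := log_sum_ineq Finset.univ Q P (fun z _ => hQ0 z) (fun z _ => hP0 z)
      (fun z _ => hac z)
    rw [hQ1, hP1] at this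
    norm_num at this
    exact this
  have hnK : 0 ≤ (n:ℝ) * K := mul_nonneg (Nat.cast_nonneg n) hKnn
  -- data processing over D and its complement
  have h1 := log_sum_ineq D (fun ω => ∏ i, Q (ω i)) (fun ω => ∏ i, P (ω i))
    (fun ω _ => hQn0 ω) (fun ω _ => hPn0 ω) (fun ω _ => hacn ω)
  have h2 := log_sum_ineq (Finset.univ \ D) (fun ω => ∏ i, Q (ω i))
    (fun ω => ∏ i, P (ω i))
    (fun ω _ => hQn0 ω) (fun ω _ => hPn0 ω) (fun ω _ => hacn ω)
  have hQc : ∑ ω ∈ Finset.univ \ D, ∏ i, Q (ω i) = 1 - q := by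
    have := Finset.sum_sdiff (f := fun ω : Fin n → Z => ∏ i, Q (ω i))
      (Finset.subset_univ D)
    rw [sum_prod_pow' Q n, hQ1, one_pow] at this
    linarith
  have hPc : ∑ ω ∈ Finset.univ \ D, ∏ i, P (ω i) = 1 - p := by
    have := Finset.sum_sdiff (f := fun ω : Fin n → Z => ∏ i, P (ω i))
      (Finset.subset_univ D)
    rw [sum_prod_pow' P n, hP1, one_pow] at this
    linarith
  rw [hQc, hPc] at h2
  have htot : (∑ ω ∈ D, (∏ i, Q (ω i)) * Real.log ((∏ i, Q (ω i)) / ∏ i, P (ω i))) +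
      ∑ ω ∈ Finset.univ \ D, (∏ i, Q (ω i)) * Real.log ((∏ i, Q (ω i)) / ∏ i, P (ω i)) =
      (n:ℝ) * K := by
    rw [add_comm, Finset.sum_sdiff (Finset.subset_univ D)]
    exact kl_tensor P Q hQ1 hac n
  have hmain : q * Real.log (q / p) + (1 - q) * Real.log ((1 - q) / (1 - p)) ≤
      (n:ℝ) * K := by
    rw [← htot]
    exact add_le_add h1 h2
  -- lower bound second term
  have h3 : (1 - q) * Real.log (1 - q) ≤ (1 - q) * Real.log ((1 - q) / (1 - p)) := by
    rcases eq_or_lt_of_le hq1 with h | h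
    · rw [← h]; simp
    · rcases eq_or_lt_of_le hp1 with h' | h'
      · rw [← h']
        simp only [sub_self, div_zero, Real.log_zero, mul_zero]
        exact mul_nonpos_of_nonneg_of_nonpos (by linarith)
          (Real.log_nonpos (by linarith) (by linarith))
      · rw [Real.log_div (by linarith : (1:ℝ) - q ≠ 0) (by linarith : (1:ℝ) - p ≠ 0)]
        have : Real.log (1 - p) ≤ 0 := Real.log_nonpos (by linarith) (by linarith)
        nlinarith
  have hqlog : q * Real.log (q / p) = q * Real.log q - q * Real.log p := by
    rw [Real.log_div hq0.ne' hp0.ne']; ring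
  have hbinq : Real.binEntropy q = -(q * Real.log q) - (1 - q) * Real.log (1 - q) := by
    simp [Real.binEntropy, Real.log_inv]; ring
  -- q * (-log p) ≤ nK + H(q)
  have h4 : q * (-Real.log p) ≤ (n:ℝ) * K + Real.binEntropy q := by
    rw [hbinq]; linarith
  -- ratio trick
  have hr : (1 - β) * Real.binEntropy q ≤ q * Real.binEntropy β := by
    have := binEntropy_ratio hβ' hQD hq1
    rwa [Real.binEntropy_one_sub] at this
  have hfin : (1 - β) * (-Real.log p) ≤ (n:ℝ) * K + Real.binEntropy β := by
    have e1 : q * ((1 - β) * (-Real.log p)) ≤ q * ((n:ℝ) * K + Real.binEntropy β) := by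
      have a1 := mul_le_mul_of_nonneg_left h4 hβ'.le
      have a2 := mul_le_mul_of_nonneg_right hQD hnK
      nlinarith [a1, a2, hr]
    exact le_of_mul_le_mul_left e1 hq0
  have hlogp : -((n:ℝ) * K + Real.binEntropy β) / (1 - β) ≤ Real.log p := by
    rw [div_le_iff₀ hβ']
    nlinarith [hfin]
  -- convert to base 2
  have hK2 : Real.log 2 * K2 = K := by
    rw [hK2def, hKdef, Finset.mul_sum]
    refine Finset.sum_congr rfl fun z _ => ?_
    rw [Real.logb]
    field_simp
  have hhb : Real.log 2 * h2b = Real.binEntropy β := by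
    rw [hh2bdef, Real.binEntropy, Real.log_inv, Real.log_inv, Real.logb, Real.logb]
    field_simp
    ring
  have hxeq : Real.log 2 * (-((n:ℝ) * K2 + h2b) / (1 - β)) =
      -((n:ℝ) * K + Real.binEntropy β) / (1 - β) := by
    rw [← hK2, ← hhb]
    field_simp
  calc (2:ℝ) ^ (-((n:ℝ) * K2 + h2b) / (1 - β))
      = Real.exp (Real.log 2 * (-((n:ℝ) * K2 + h2b) / (1 - β))) := by
        rw [Real.rpow_def_of_pos (by norm_num : (0:ℝ) < 2)]
    _ ≤ Real.exp (Real.log p) := by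
        apply Real.exp_le_exp.2
        rw [hxeq]
        exact hlogp
    _ = p := Real.exp_log hp0
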